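/- arXiv:2007.09531 — 2 statements merged into one kernel-verified Lean document; each statement's English description precedes it below -/
import Mathlib

section
/- For every real parameter M ≥ 1, the modified double-well potential F_M is nonnegative on ℝ, and the function x ↦ √(F_M(x)) is Lipschitz continuous on ℝ with Lipschitz constant 2M, i.e. |√(F_M(x)) − √(F_M(y))| ≤ 2M·|x − y| for all x, y ∈ ℝ. -/
/-- The modified double-well potential `F_M` with cut-off parameter `M`:
the antiderivative of the modified nonlinearity `f_M`, normalized by `F_M(0) = 1/4`. -/
noncomputable def FM (M x : ℝ) : ℝ :=
  if |x| ≤ M then (1 - x ^ 2) ^ 2 / 4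
  else (1 - M ^ 2) ^ 2 / 4 + (3 * M ^ 2 - 1) * (x ^ 2 - M ^ 2) / 2 - 2 * M ^ 3 * (|x| - M)

private lemma FM_abs (M x : ℝ) : FM M x = FM M |x| := by
  unfold FM; rw [abs_abs, sq_abs]

/-- the quadratic q governing the outer region -/
private noncomputable def qq (M t : ℝ) : ℝ := ((6*M^2-2)*t^2 - 8*M^3*t + 3*M^4+1)/4

private lemma qq_nonneg (M t : ℝ) (hM : 1 ≤ M) (ht : M ≤ t) : 0 ≤ qq M t := by
  have h1 : (0:ℝ) ≤ 6*M^2-2 := by nlinarith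
  have h2 : (0:ℝ) ≤ M^3-M := by nlinarith
  unfold qq
  nlinarith [sq_nonneg (M^2-1), mul_nonneg h1 (sq_nonneg (t-M)), mul_nonneg h2 (sub_nonneg.2 ht)]

private lemma qq_deriv_bound (M t : ℝ) (hM : 1 ≤ M) (ht : M ≤ t) :
    ((3*M^2-1)*t - 2*M^3)^2 ≤ 16*M^2 * qq M t := by
  -- D(t) = (15M⁴-2M²-1)(t-M)² + 2M(M²-1)(5M²+1)(t-M) + 3M²(M²-1)²
  have h1 : (0:ℝ) ≤ 15*M^4-2*M^2-1 := by nlinarith [sq_nonneg (M-1), sq_nonneg (M^2-1)]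
  have h2 : (0:ℝ) ≤ M*(M^2-1)*(5*M^2+1) := by nlinarith [sq_nonneg M, mul_nonneg (le_trans zero_le_one hM) (sub_nonneg.2 (by nlinarith : (1:ℝ) ≤ M^2))]
  have h3 : (0:ℝ) ≤ M^2*(M^2-1)^2 := by positivity
  unfold qq
  nlinarith [mul_nonneg h1 (sq_nonneg (t-M)), mul_nonneg h2 (sub_nonneg.2 ht), h3]

private lemma FM_eq_qq (M t : ℝ) (hM : 1 ≤ M) (ht : M ≤ t) : FM M t = qq M t := by
  have h0 : 0 ≤ t := le_trans (le_trans zero_le_one hM) ht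
  have habs : |t| = t := abs_of_nonneg h0
  rcases eq_or_lt_of_le ht with h | h
  · have : |t| ≤ M := by rw [habs, ← h]
    rw [FM, if_pos this, qq, ← h]; ring
  · have : ¬ |t| ≤ M := by rw [habs]; linarith
    rw [FM, if_neg this, qq, habs]; ring

private lemma FM_eq_sq (M t : ℝ) (h0 : 0 ≤ t) (ht : t ≤ M) :
    FM M t = ((1 - t^2)/2)^2 := by
  have : |t| ≤ M := by rw [abs_of_nonneg h0]; exact ht
  rw [FM, if_pos this]; ring

private lemma sqrtFM_low (M t : ℝ) (hM : 1 ≤ M) (h0 : 0 ≤ t) (h1 : t ≤ 1) :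
    Real.sqrt (FM M t) = (1 - t^2)/2 := by
  rw [FM_eq_sq M t h0 (le_trans h1 hM), Real.sqrt_sq (by nlinarith)]

private lemma sqrtFM_mid (M t : ℝ) (h1 : 1 ≤ t) (h2 : t ≤ M) :
    Real.sqrt (FM M t) = (t^2 - 1)/2 := by
  have h0 : (0:ℝ) ≤ t := le_trans zero_le_one h1
  rw [FM_eq_sq M t h0 h2, show ((1 - t^2)/2)^2 = ((t^2-1)/2)^2 by ring,
    Real.sqrt_sq (by nlinarith)]

/-- Lipschitz step on the outer region. -/
private lemma lip_outer (M s t : ℝ) (hM : 1 ≤ M) (hs : M ≤ s) (hst : s ≤ t) :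
    |Real.sqrt (FM M t) - Real.sqrt (FM M s)| ≤ 2*M*(t-s) := by
  have ht : M ≤ t := le_trans hs hst
  rw [FM_eq_qq M s hM hs, FM_eq_qq M t hM ht]
  have hqs := qq_nonneg M s hM hs
  have hqt := qq_nonneg M t hM ht
  set ws := Real.sqrt (qq M s) with hws
  set wt := Real.sqrt (qq M t) with hwt
  have hws0 : 0 ≤ ws := Real.sqrt_nonneg _
  have hwt0 : 0 ≤ wt := Real.sqrt_nonneg _
  have hws2 : ws^2 = qq M s := Real.sq_sqrt hqs
  have hwt2 : wt^2 = qq M t := Real.sq_sqrt hqt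
  have hM0 : (0:ℝ) < M := lt_of_lt_of_le zero_lt_one hM
  rw [abs_sub_le_iff]
  have hPs : (3*M^2-1)*s - 2*M^3 ≤ 4*M*ws := by
    have h := qq_deriv_bound M s hM hs
    rw [← hws2] at h
    nlinarith [mul_nonneg (mul_nonneg hM0.le hws0) hws0,
      mul_nonneg hM0.le hws0, sq_nonneg ((3*M^2-1)*s - 2*M^3 + 4*M*ws)]
  have hPt : -((3*M^2-1)*t - 2*M^3) ≤ 4*M*wt := by
    have h := qq_deriv_bound M t hM ht
    rw [← hwt2] at h
    nlinarith [mul_nonneg (mul_nonneg hM0.le hwt0) hwt0,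
      mul_nonneg hM0.le hwt0, sq_nonneg ((3*M^2-1)*t - 2*M^3 - 4*M*wt)]
  constructor
  · -- wt - ws ≤ 2M(t-s): show qq M t ≤ (ws + 2M(t-s))²
    have key : qq M t ≤ (ws + 2*M*(t-s))^2 := by
      have hq : qq M t - qq M s = (t-s)*((3*M^2-1)*s - 2*M^3) + (3*M^2-1)*(t-s)^2/2 := by
        unfold qq; ring
      nlinarith [sq_nonneg (t-s), mul_nonneg (sub_nonneg.2 hst) hws0,
        mul_le_mul_of_nonneg_left hPs (sub_nonneg.2 hst),
        mul_nonneg (mul_nonneg hM0.le hM0.le) (sq_nonneg (t-s))]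
    have h2 : wt ≤ ws + 2*M*(t-s) := by
      calc wt = Real.sqrt (qq M t) := hwt
        _ ≤ Real.sqrt ((ws + 2*M*(t-s))^2) := Real.sqrt_le_sqrt key
        _ = ws + 2*M*(t-s) := Real.sqrt_sq (add_nonneg hws0 (by nlinarith))
    linarith
  · have key : qq M s ≤ (wt + 2*M*(t-s))^2 := by
      have hq : qq M s - qq M t = (t-s)*(-((3*M^2-1)*t - 2*M^3)) + (3*M^2-1)*(t-s)^2/2 := by
        unfold qq; ring
      nlinarith [sq_nonneg (t-s), mul_nonneg (sub_nonneg.2 hst) hwt0,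
        mul_le_mul_of_nonneg_left hPt (sub_nonneg.2 hst),
        mul_nonneg (mul_nonneg hM0.le hM0.le) (sq_nonneg (t-s))]
    have h2 : ws ≤ wt + 2*M*(t-s) := by
      calc ws = Real.sqrt (qq M s) := hws
        _ ≤ Real.sqrt ((wt + 2*M*(t-s))^2) := Real.sqrt_le_sqrt key
        _ = wt + 2*M*(t-s) := Real.sqrt_sq (add_nonneg hwt0 (by nlinarith))
    linarith

private lemma lip_low (M s t : ℝ) (hM : 1 ≤ M) (h0 : 0 ≤ s) (hst : s ≤ t) (h1 : t ≤ 1) :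
    |Real.sqrt (FM M t) - Real.sqrt (FM M s)| ≤ 2*M*(t-s) := by
  rw [sqrtFM_low M s hM h0 (le_trans hst h1), sqrtFM_low M t hM (le_trans h0 hst) h1,
    abs_sub_le_iff]
  constructor <;> nlinarith

private lemma lip_mid (M s t : ℝ) (hM : 1 ≤ M) (h1 : 1 ≤ s) (hst : s ≤ t) (h2 : t ≤ M) :
    |Real.sqrt (FM M t) - Real.sqrt (FM M s)| ≤ 2*M*(t-s) := by
  rw [sqrtFM_mid M s h1 (le_trans hst h2), sqrtFM_mid M t (le_trans h1 hst) h2,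
    abs_sub_le_iff]
  constructor <;> nlinarith

/-- Full one-sided Lipschitz on the nonnegative half line. -/
private lemma lip_nn (M s t : ℝ) (hM : 1 ≤ M) (h0 : 0 ≤ s) (hst : s ≤ t) :
    |Real.sqrt (FM M t) - Real.sqrt (FM M s)| ≤ 2*M*(t-s) := by
  have tri : ∀ a b c u v : ℝ, |Real.sqrt (FM M c) - Real.sqrt (FM M b)| ≤ u →
      |Real.sqrt (FM M b) - Real.sqrt (FM M a)| ≤ v →
      |Real.sqrt (FM M c) - Real.sqrt (FM M a)| ≤ u + v := by
    intro a b c u v h h'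
    calc |Real.sqrt (FM M c) - Real.sqrt (FM M a)|
        ≤ |Real.sqrt (FM M c) - Real.sqrt (FM M b)| + |Real.sqrt (FM M b) - Real.sqrt (FM M a)| :=
          abs_sub_le _ _ _
      _ ≤ u + v := add_le_add h h'
  rcases le_or_gt t 1 with ht1 | ht1
  · exact lip_low M s t hM h0 hst ht1
  rcases le_or_gt t M with htM | htM
  · rcases le_or_gt 1 s with hs1 | hs1
    · exact lip_mid M s t hM hs1 hst htM
    · have h := tri s 1 t (2*M*(t-1)) (2*M*(1-s))
        (lip_mid M 1 t hM le_rfl ht1.le htM)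
        (lip_low M s 1 hM h0 hs1.le le_rfl)
      calc |Real.sqrt (FM M t) - Real.sqrt (FM M s)| ≤ 2*M*(t-1) + 2*M*(1-s) := h
        _ = 2*M*(t-s) := by ring
  · rcases le_or_gt M s with hsM | hsM
    · exact lip_outer M s t hM hsM hst
    rcases le_or_gt 1 s with hs1 | hs1
    · have h := tri s M t (2*M*(t-M)) (2*M*(M-s))
        (lip_outer M M t hM le_rfl htM.le)
        (lip_mid M s M hM hs1 hsM.le le_rfl)
      calc |Real.sqrt (FM M t) - Real.sqrt (FM M s)| ≤ 2*M*(t-M) + 2*M*(M-s) := h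
        _ = 2*M*(t-s) := by ring
    · have h1 := tri 1 M t (2*M*(t-M)) (2*M*(M-1))
        (lip_outer M M t hM le_rfl htM.le)
        (lip_mid M 1 M hM le_rfl hM le_rfl)
      have h := tri s 1 t (2*M*(t-M) + 2*M*(M-1)) (2*M*(1-s)) h1
        (lip_low M s 1 hM h0 hs1.le le_rfl)
      calc |Real.sqrt (FM M t) - Real.sqrt (FM M s)|
          ≤ 2*M*(t-M) + 2*M*(M-1) + 2*M*(1-s) := h
        _ = 2*M*(t-s) := by ring

/-- `F_M` is nonnegative and `x ↦ √(F_M(x))` is `2M`-Lipschitz on `ℝ`. -/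
theorem FM_nonneg_sqrt_lipschitz (M : ℝ) (hM : 1 ≤ M) :
    (∀ x : ℝ, 0 ≤ FM M x) ∧
    (∀ x y : ℝ, |Real.sqrt (FM M x) - Real.sqrt (FM M y)| ≤ 2 * M * |x - y|) := by
  constructor
  · intro x
    rcases le_or_gt |x| M with h | h
    · rw [FM, if_pos h]; positivity
    · rw [FM_abs, FM_eq_qq M |x| hM h.le]
      exact qq_nonneg M |x| hM h.le
  · intro x y
    have hM0 : (0:ℝ) ≤ 2*M := by linarith
    have habs : |(|x| - |y|)| ≤ |x - y| := abs_abs_sub_abs_le_abs_sub x y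
    have key : |Real.sqrt (FM M x) - Real.sqrt (FM M y)| ≤ 2*M*|(|x| - |y|)| := by
      rw [FM_abs M x, FM_abs M y]
      rcases le_total |y| |x| with h | h
      · have := lip_nn M |y| |x| hM (abs_nonneg y) h
        rwa [abs_of_nonneg (by linarith : (0:ℝ) ≤ |x| - |y|)]
      · have := lip_nn M |x| |y| hM (abs_nonneg x) h
        rw [abs_sub_comm]
        rwa [abs_of_nonpos (by linarith : |x| - |y| ≤ 0), neg_sub]
    calc |Real.sqrt (FM M x) - Real.sqrt (FM M y)| ≤ 2*M*|(|x| - |y|)| := key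
      _ ≤ 2*M*|x - y| := mul_le_mul_of_nonneg_left habs hM0
end

section
/- If u : ℝ → ℝ is twice continuously differentiable and satisfies u''(ξ) = u(ξ)³ − u(ξ) for all ξ ∈ ℝ, u(0) = 0, lim_{ξ→+∞} u(ξ) = 1, and lim_{ξ→−∞} u(ξ) = −1, then u(ξ) = tanh(ξ/√2) for every ξ ∈ ℝ; i.e., the connecting-orbit boundary value problem for the profile equation has the unique solution tanh(ξ/√2). -/
open Filter

lemma gronwall_zero_ge {f f' : ℝ → ℝ} {K : ℝ} (hd : ∀ t, HasDerivAt f (f' t) t)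
    (hb : ∀ t, |f' t| ≤ K * |f t|) {a b : ℝ} (ha : f a = 0) (hab : a ≤ b) : f b = 0 := by
  have h := norm_le_gronwallBound_of_norm_deriv_right_le (f := f) (f' := f')
    (δ := 0) (K := K) (ε := 0) (a := a) (b := b)
    (fun t _ => (hd t).continuousAt.continuousWithinAt)
    (fun t _ => (hd t).hasDerivWithinAt)
    (by simp [ha])
    (fun t _ => by simpa [Real.norm_eq_abs] using hb t)
  have h2 := h b (Set.right_mem_Icc.2 hab)
  rw [gronwallBound_ε0_δ0] at h2
  simp only [Real.norm_eq_abs] at h2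
  exact abs_eq_zero.mp (le_antisymm h2 (abs_nonneg _))

lemma gronwall_zero {f f' : ℝ → ℝ} {K : ℝ} (hd : ∀ t, HasDerivAt f (f' t) t)
    (hb : ∀ t, |f' t| ≤ K * |f t|) {a : ℝ} (ha : f a = 0) (t : ℝ) : f t = 0 := by
  rcases le_total a t with h | h
  · exact gronwall_zero_ge hd hb ha h
  · have hg : ∀ s, HasDerivAt (fun s => f (2 * a - s)) (-(f' (2 * a - s))) s := by
      intro s
      have h1 : HasDerivAt (fun s : ℝ => 2 * a - s) (-1) s := by
        exact (hasDerivAt_id s).const_sub (2 * a)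
      have := (hd (2 * a - s)).comp s h1
      exact this.congr_deriv (by ring)
    have hb' : ∀ s, |(-(f' (2 * a - s)))| ≤ K * |f (2 * a - s)| := by
      intro s; simpa using hb (2 * a - s)
    have ha' : f (2 * a - a) = 0 := by rw [show 2 * a - a = a by ring]; exact ha
    have := gronwall_zero_ge (f := fun s => f (2 * a - s)) hg hb' ha' (by linarith : a ≤ 2 * a - t)
    simpa using this

lemma tanh_hasDerivAt (x : ℝ) : HasDerivAt Real.tanh (1 - Real.tanh x ^ 2) x := by
  have hc := Real.hasDerivAt_cosh x
  have hs := Real.hasDerivAt_sinh x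
  have hpos := Real.cosh_pos x
  have h := hs.div hc hpos.ne'
  have ht : Real.tanh = fun y => Real.sinh y / Real.cosh y :=
    funext fun y => Real.tanh_eq_sinh_div_cosh y
  rw [ht]
  refine h.congr_deriv ?_
  have hid := Real.cosh_sq_sub_sinh_sq x
  beta_reduce
  field_simp

/-- Uniqueness of the connecting orbit for the profile equation `u'' = u³ − u`:
any `C²` solution with `u(0) = 0`, `u → 1` at `+∞` and `u → −1` at `−∞` is
the transition profile `tanh(ξ/√2)`. -/
theorem profile_uniqueness (u : ℝ → ℝ)
    (hu : ContDiff ℝ 2 u)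
    (hode : ∀ ξ : ℝ, deriv (deriv u) ξ = u ξ ^ 3 - u ξ)
    (h0 : u 0 = 0)
    (htop : Tendsto u atTop (nhds 1))
    (hbot : Tendsto u atBot (nhds (-1))) :
    ∀ ξ : ℝ, u ξ = Real.tanh (ξ / Real.sqrt 2) := by
  -- basic differentiability facts
  have hu1 : Differentiable ℝ u := hu.differentiable (by norm_num)
  have hu2 : ContDiff ℝ 1 (deriv u) := by
    have : ContDiff ℝ (1 + 1 : ℕ) u := by exact_mod_cast hu
    exact (contDiff_succ_iff_deriv.mp this).2.2
  have hud : Differentiable ℝ (deriv u) := hu2.differentiable (by norm_num)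
  have hd1 : ∀ x, HasDerivAt u (deriv u x) x := fun x => (hu1 x).hasDerivAt
  have hd2 : ∀ x, HasDerivAt (deriv u) (u x ^ 3 - u x) x := fun x => by
    have := (hud x).hasDerivAt
    rwa [hode x] at this
  -- boundedness of u
  obtain ⟨B, hB2, hB⟩ : ∃ B : ℝ, 2 ≤ B ∧ ∀ x, |u x| ≤ B := by
    have h1 : ∀ᶠ x in atTop, u x ∈ Set.Icc (0:ℝ) 2 :=
      htop (Icc_mem_nhds (by norm_num) (by norm_num))
    have h2 : ∀ᶠ x in atBot, u x ∈ Set.Icc (-2:ℝ) 0 :=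
      hbot (Icc_mem_nhds (by norm_num) (by norm_num))
    obtain ⟨A, hA⟩ := eventually_atTop.mp h1
    obtain ⟨A', hA'⟩ := eventually_atBot.mp h2
    obtain ⟨C, hC⟩ := (isCompact_Icc (a := A') (b := A)).exists_bound_of_continuousOn
      hu1.continuous.continuousOn
    refine ⟨max 2 C, le_max_left _ _, fun x => ?_⟩
    rcases le_or_gt A x with h | h
    · have := hA x h
      rw [abs_le]; constructor
      · linarith [this.1, le_max_left 2 C]
      · exact le_trans this.2 (le_max_left _ _)
    rcases le_or_gt x A' with h' | h'
    · have := hA' x h'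
      rw [abs_le]; constructor
      · linarith [this.1, le_max_left 2 C]
      · linarith [this.2, le_max_left 2 C]
    · have := hC x ⟨h'.le, h.le⟩
      rw [Real.norm_eq_abs] at this
      exact le_trans this (le_max_right _ _)
  -- bound on u'' = u³ − u
  obtain ⟨M, hM0, hM⟩ : ∃ M : ℝ, 0 < M ∧ ∀ x, |u x ^ 3 - u x| ≤ M := by
    refine ⟨B ^ 3 + B, by nlinarith [hB2, sq_nonneg B], fun x => ?_⟩
    have h1 := hB x
    have h2 : |u x ^ 3 - u x| ≤ |u x| ^ 3 + |u x| := by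
      calc |u x ^ 3 - u x| ≤ |u x ^ 3| + |u x| := abs_sub _ _
        _ = |u x| ^ 3 + |u x| := by rw [abs_pow]
    have h3 : |u x| ^ 3 ≤ B ^ 3 := by
      apply pow_le_pow_left₀ (abs_nonneg _) h1
    linarith
  -- deriv u tends to 0 at +∞
  have hd'0 : Tendsto (deriv u) atTop (nhds 0) := by
    rw [Metric.tendsto_atTop]
    intro ε hε
    set h : ℝ := ε / (2 * M) with hh
    have hhpos : 0 < h := div_pos hε (by linarith)
    have hhM : h * M = ε / 2 := by
      rw [hh]
      field_simp
    have hdiff : Tendsto (fun x => u (x + h) - u x) atTop (nhds 0) := by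
      have h1 : Tendsto (fun x : ℝ => x + h) atTop atTop :=
        tendsto_atTop_add_const_right atTop h tendsto_id
      have := (htop.comp h1).sub htop
      simpa using this
    have hsmall : ∀ᶠ x in atTop, |u (x + h) - u x| < (ε / 2) * h := by
      have hp : (0:ℝ) < (ε / 2) * h := by positivity
      have := hdiff (Metric.ball_mem_nhds 0 hp)
      simpa [Real.dist_eq] using this
    obtain ⟨N, hN⟩ := eventually_atTop.mp hsmall
    refine ⟨N, fun x hx => ?_⟩
    obtain ⟨c, hc, hceq⟩ := exists_hasDerivAt_eq_slope u (deriv u) (by linarith : x < x + h)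
      hu1.continuous.continuousOn (fun y _ => hd1 y)
    have hxc : x < c := hc.1
    obtain ⟨d, _, hdeq⟩ := exists_hasDerivAt_eq_slope (deriv u) (fun y => u y ^ 3 - u y)
      hxc hu2.continuous.continuousOn (fun y _ => hd2 y)
    have hcb : |deriv u c| < ε / 2 := by
      rw [hceq]
      rw [abs_div]
      rw [abs_of_pos (by linarith : (0:ℝ) < x + h - x)]
      rw [div_lt_iff₀ (by linarith : (0:ℝ) < x + h - x)]
      calc |u (x + h) - u x| < (ε / 2) * h := hN x hx
        _ = ε / 2 * (x + h - x) := by ring_nf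
    have hdiff2 : |deriv u c - deriv u x| ≤ h * M := by
      have heq : deriv u c - deriv u x = (u d ^ 3 - u d) * (c - x) := by
        have hne : c - x ≠ 0 := by linarith
        field_simp at hdeq
        linarith [hdeq]
      rw [heq, abs_mul]
      have h1 : |u d ^ 3 - u d| ≤ M := hM d
      have h2 : |c - x| ≤ h := by
        rw [abs_of_pos (by linarith : (0:ℝ) < c - x)]
        linarith [hc.2]
      calc |u d ^ 3 - u d| * |c - x| ≤ M * h :=
            mul_le_mul h1 h2 (abs_nonneg _) hM0.le
        _ = h * M := by ring
    rw [Real.dist_eq, sub_zero]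
    calc |deriv u x| ≤ |deriv u c| + |deriv u c - deriv u x| := by
          have h3 := abs_sub_abs_le_abs_sub (deriv u x) (deriv u c)
          rw [abs_sub_comm] at h3
          linarith
      _ < ε / 2 + h * M := by linarith [hdiff2, hcb]
      _ = ε := by rw [hhM]; ring
  -- energy identity
  have key : ∀ x, (deriv u x) ^ 2 = (u x ^ 2 - 1) ^ 2 / 2 := by
    set E : ℝ → ℝ := fun x => (deriv u x) ^ 2 / 2 - (u x ^ 2 - 1) ^ 2 / 4 with hE
    have hE' : ∀ x, HasDerivAt E 0 x := by
      intro x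
      have h1 : HasDerivAt (fun y => (deriv u y) ^ 2 / 2)
          (2 * deriv u x ^ 1 * (u x ^ 3 - u x) / 2) x := ((hd2 x).pow 2).div_const 2
      have h2 : HasDerivAt (fun y => (u y ^ 2 - 1) ^ 2 / 4)
          (2 * (u x ^ 2 - 1) ^ 1 * (2 * u x ^ 1 * deriv u x) / 4) x :=
        ((((hd1 x).pow 2).sub_const 1).pow 2).div_const 4
      have h3 := h1.sub h2
      refine h3.congr_deriv ?_
      ring
    have hEc : ∀ x, E x = E 0 := fun x =>
      is_const_of_deriv_eq_zero (fun t => (hE' t).differentiableAt)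
        (fun t => (hE' t).deriv) x 0
    have hEtop : Tendsto E atTop (nhds 0) := by
      have h1 : Tendsto (fun x => (deriv u x) ^ 2 / 2) atTop (nhds ((0:ℝ) ^ 2 / 2)) :=
        (hd'0.pow 2).div_const 2
      have h2 : Tendsto (fun x => (u x ^ 2 - 1) ^ 2 / 4) atTop (nhds (((1:ℝ) ^ 2 - 1) ^ 2 / 4)) :=
        (((htop.pow 2).sub_const 1).pow 2).div_const 4
      have := h1.sub h2
      norm_num at this
      exact this
    have hE0 : E 0 = 0 := by
      have hconst : Tendsto E atTop (nhds (E 0)) := by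
        have : E = fun _ => E 0 := funext hEc
        rw [this]; exact tendsto_const_nhds
      exact (tendsto_nhds_unique hconst hEtop)
    intro x
    have := hEc x
    rw [hE0] at this
    simp only [hE] at this
    linarith
  -- u stays strictly between -1 and 1
  have hlt : ∀ x, -1 < u x ∧ u x < 1 := by
    have hnot : ∀ (e : ℝ), e = 1 ∨ e = -1 → ∀ a, u a ≠ e := by
      rintro e he a hae
      have hbd : ∀ x, |deriv u x| ≤ (1 + B) * |u x - e| := by
        intro x
        have h1 : (deriv u x) ^ 2 ≤ ((1 + B) * |u x - e|) ^ 2 := by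
          rw [key x]
          have h2 : u x ^ 2 - 1 = (u x - e) * (u x + e) := by
            rcases he with h | h <;> (subst h; ring)
          rw [h2]
          have h3 : |u x + e| ≤ 1 + B := by
            have h4 : |e| = 1 := by rcases he with h | h <;> simp [h]
            calc |u x + e| ≤ |u x| + |e| := abs_add_le _ _
              _ ≤ B + 1 := by rw [h4]; linarith [hB x]
              _ = 1 + B := by ring
          have h6 : (u x + e) ^ 2 ≤ (1 + B) ^ 2 := by
            rw [← sq_abs (u x + e)]
            apply pow_le_pow_left₀ (abs_nonneg _) h3
          nlinarith [mul_le_mul_of_nonneg_left h6 (sq_nonneg (u x - e)), sq_abs (u x - e),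
            sq_nonneg (u x - e), sq_nonneg (1 + B)]
        have h8 : 0 ≤ (1 + B) * |u x - e| := by positivity
        nlinarith [abs_nonneg (deriv u x), sq_abs (deriv u x)]
      have hz := gronwall_zero (f := fun x => u x - e) (f' := deriv u) (K := 1 + B)
        (fun t => by simpa using (hd1 t).sub_const e)
        (fun t => hbd t) (a := a) (by simp [hae]) 0
      rcases he with h | h <;> (subst h; rw [h0] at hz; norm_num at hz)
    intro x
    constructor
    · by_contra hcon
      push_neg at hcon
      have hne := hnot (-1) (Or.inr rfl) x
      have hlt1 : u x < -1 := lt_of_le_of_ne hcon hne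
      rcases le_total 0 x with hx | hx
      · obtain ⟨c, _, hc⟩ := intermediate_value_Icc' hx hu1.continuous.continuousOn
          (show (-1:ℝ) ∈ Set.Icc (u x) (u 0) by rw [h0]; constructor <;> linarith)
        exact hnot (-1) (Or.inr rfl) c hc
      · obtain ⟨c, _, hc⟩ := intermediate_value_Icc hx hu1.continuous.continuousOn
          (show (-1:ℝ) ∈ Set.Icc (u x) (u 0) by rw [h0]; constructor <;> linarith)
        exact hnot (-1) (Or.inr rfl) c hc
    · by_contra hcon
      push_neg at hcon
      have hne := hnot 1 (Or.inl rfl) x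
      have hlt1 : 1 < u x := lt_of_le_of_ne hcon (Ne.symm hne)
      rcases le_total 0 x with hx | hx
      · obtain ⟨c, _, hc⟩ := intermediate_value_Icc hx hu1.continuous.continuousOn
          (show (1:ℝ) ∈ Set.Icc (u 0) (u x) by rw [h0]; constructor <;> linarith)
        exact hnot 1 (Or.inl rfl) c hc
      · obtain ⟨c, _, hc⟩ := intermediate_value_Icc' hx hu1.continuous.continuousOn
          (show (1:ℝ) ∈ Set.Icc (u 0) (u x) by rw [h0]; constructor <;> linarith)
        exact hnot 1 (Or.inl rfl) c hc
  -- conclude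
  have hs2 : (0:ℝ) < Real.sqrt 2 := Real.sqrt_pos.mpr (by norm_num)
  have hs2' : Real.sqrt 2 ^ 2 = 2 := Real.sq_sqrt (by norm_num)
  have hs1 : (1:ℝ) ≤ Real.sqrt 2 := by nlinarith
  have hne0 : ∀ x, deriv u x ≠ 0 := by
    intro x hx
    have hk := key x
    rw [hx] at hk
    have h1 := (hlt x).1
    have h2 := (hlt x).2
    have hp : (0:ℝ) < 1 - u x ^ 2 := by nlinarith
    nlinarith [mul_pos hp hp]
  have hex : ∃ c, 0 < deriv u c := by
    have h1 : ∀ᶠ x in atTop, u x ∈ Set.Ioi (1/2 : ℝ) :=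
      htop (Ioi_mem_nhds (by norm_num))
    obtain ⟨N, hN⟩ := eventually_atTop.mp h1
    set b := max N 1 with hb
    have hb1 : (1:ℝ) ≤ b := le_max_right _ _
    have hub : 1/2 < u b := hN b (le_max_left _ _)
    obtain ⟨c, _, hc⟩ := exists_hasDerivAt_eq_slope u (deriv u) (by linarith : (0:ℝ) < b)
      hu1.continuous.continuousOn (fun y _ => hd1 y)
    refine ⟨c, ?_⟩
    rw [hc, h0, sub_zero, sub_zero]
    positivity
  have hpos : ∀ x, 0 < deriv u x := by
    obtain ⟨c, hc⟩ := hex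
    intro x
    by_contra hcon
    push_neg at hcon
    have hneg : deriv u x < 0 := lt_of_le_of_ne hcon (hne0 x)
    rcases le_total x c with h | h
    · obtain ⟨d, _, hd⟩ := intermediate_value_Icc h hu2.continuous.continuousOn
        (show (0:ℝ) ∈ Set.Icc (deriv u x) (deriv u c) by constructor <;> linarith)
      exact hne0 d hd
    · obtain ⟨d, _, hd⟩ := intermediate_value_Icc' h hu2.continuous.continuousOn
        (show (0:ℝ) ∈ Set.Icc (deriv u x) (deriv u c) by constructor <;> linarith)
      exact hne0 d hd
  have hfirst : ∀ x, deriv u x = (1 - u x ^ 2) / Real.sqrt 2 := by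
    intro x
    have h1 : (0:ℝ) < 1 - u x ^ 2 := by nlinarith [(hlt x).1, (hlt x).2]
    have h2 : (0:ℝ) < (1 - u x ^ 2) / Real.sqrt 2 := by positivity
    have h3 : (deriv u x) ^ 2 = ((1 - u x ^ 2) / Real.sqrt 2) ^ 2 := by
      rw [key x, div_pow, hs2']
      ring
    exact (sq_eq_sq₀ (hpos x).le h2.le).mp h3
  set g : ℝ → ℝ := fun x => Real.tanh (x / Real.sqrt 2) with hgdef
  have hg0 : g 0 = 0 := by simp [hgdef, Real.tanh_zero]
  have hgb : ∀ x, |g x| ≤ 1 := by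
    intro x
    have h1 := Real.cosh_pos (x / Real.sqrt 2)
    have h2 := Real.cosh_sq_sub_sinh_sq (x / Real.sqrt 2)
    simp only [hgdef, Real.tanh_eq_sinh_div_cosh, abs_div, abs_of_pos h1]
    rw [div_le_one h1]
    nlinarith [sq_abs (Real.sinh (x / Real.sqrt 2)), abs_nonneg (Real.sinh (x / Real.sqrt 2))]
  have hg' : ∀ x, HasDerivAt g ((1 - g x ^ 2) / Real.sqrt 2) x := by
    intro x
    have h1 : HasDerivAt (fun y : ℝ => y / Real.sqrt 2) (1 / Real.sqrt 2) x := by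
      simpa using (hasDerivAt_id x).div_const (Real.sqrt 2)
    have := (tanh_hasDerivAt (x / Real.sqrt 2)).comp x h1
    exact this.congr_deriv (by simp only [hgdef]; ring)
  set f : ℝ → ℝ := fun x => u x - g x with hfdef
  have hf' : ∀ x, HasDerivAt f ((1 - u x ^ 2) / Real.sqrt 2 - (1 - g x ^ 2) / Real.sqrt 2) x := by
    intro x
    have h1 : HasDerivAt u ((1 - u x ^ 2) / Real.sqrt 2) x := hfirst x ▸ hd1 x
    exact h1.sub (hg' x)
  have hfb : ∀ x, |(1 - u x ^ 2) / Real.sqrt 2 - (1 - g x ^ 2) / Real.sqrt 2| ≤ (1 + B) * |f x| := by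
    intro x
    have heq : (1 - u x ^ 2) / Real.sqrt 2 - (1 - g x ^ 2) / Real.sqrt 2
        = (g x + u x) * (g x - u x) / Real.sqrt 2 := by
      field_simp
      ring
    rw [heq, abs_div, abs_of_pos hs2]
    have h1 : |g x + u x| ≤ 1 + B := by
      calc |g x + u x| ≤ |g x| + |u x| := abs_add_le _ _
        _ ≤ 1 + B := add_le_add (hgb x) (hB x)
    have h2 : |g x - u x| = |f x| := by rw [hfdef, abs_sub_comm]
    calc |(g x + u x) * (g x - u x)| / Real.sqrt 2 ≤ |(g x + u x) * (g x - u x)| :=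
          div_le_self (abs_nonneg _) hs1
      _ = |g x + u x| * |g x - u x| := abs_mul _ _
      _ ≤ (1 + B) * |f x| := by rw [h2]; exact mul_le_mul_of_nonneg_right h1 (abs_nonneg _)
  have hf0 : f 0 = 0 := by simp [hfdef, h0, hg0]
  intro ξ
  have hz := gronwall_zero (f := f) (K := 1 + B) hf' hfb (a := 0) hf0 ξ
  have h2 : u ξ - g ξ = 0 := hz
  simp only [hgdef] at h2 ⊢
  linarith
end
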